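/- Let α ∈ (0,1) and a > 0. For every n ∈ ℕ, h > 0, and t < -n·h, the n-th finite difference Σ_{k=0}^{n} (-1)^{n-k} (n choose k) exp(-a·(-(t+kh))^α) is nonnegative. -/

import Mathlib

open Real Finset

namespace Stmt13Aux

/-- Evaluate a list of (coefficient, exponent) pairs as `∑ cᵢ x ^ eᵢ` (rpow). -/
noncomputable def evalL (L : List (ℝ × ℝ)) (x : ℝ) : ℝ := (L.map (fun p => p.1 * x ^ p.2)).sum

/-- Formal derivative list. -/
noncomputable def dL (L : List (ℝ × ℝ)) : List (ℝ × ℝ) := L.map (fun p => (p.1 * p.2, p.2 - 1))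

lemma hasDerivAt_evalL (L : List (ℝ × ℝ)) (x : ℝ) (hx : x ≠ 0) :
    HasDerivAt (fun y => evalL L y) (evalL (dL L) x) x := by
  induction L with
  | nil => simpa [evalL, dL] using hasDerivAt_const x (0:ℝ)
  | cons p L ih =>
      have h1 : HasDerivAt (fun y : ℝ => p.1 * y ^ p.2) (p.1 * p.2 * x ^ (p.2 - 1)) x := by
        have := (Real.hasDerivAt_rpow_const (x := x) (p := p.2) (Or.inl hx)).const_mul p.1
        simpa only [mul_assoc] using this
      have := h1.add ih
      simpa [evalL, dL, Pi.add_def] using this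

def Good (a α : ℝ) (G : ℝ → ℝ) : Prop :=
  ∃ L : List (ℝ × ℝ), (∀ p ∈ L, 0 ≤ p.1 ∧ p.2 ≤ 0) ∧
    ∀ x, 0 < x → G x = Real.exp (-a * x ^ α) * evalL L x

lemma evalL_nonneg {L : List (ℝ × ℝ)} (hL : ∀ p ∈ L, 0 ≤ p.1 ∧ p.2 ≤ 0) {x : ℝ}
    (hx : 0 ≤ x) : 0 ≤ evalL L x := by
  apply List.sum_nonneg
  intro y hy
  simp only [List.mem_map] at hy
  obtain ⟨p, hp, rfl⟩ := hy
  exact mul_nonneg (hL p hp).1 (Real.rpow_nonneg hx _)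

lemma good_nonneg {a α : ℝ} {G : ℝ → ℝ} (hG : Good a α G) {x : ℝ} (hx : 0 < x) :
    0 ≤ G x := by
  obtain ⟨L, hL, hGx⟩ := hG
  rw [hGx x hx]
  exact mul_nonneg (Real.exp_nonneg _) (evalL_nonneg hL hx.le)

lemma evalL_map_shift (L : List (ℝ × ℝ)) (c d x : ℝ) (hx : 0 < x) :
    evalL (L.map (fun p => (c * p.1, p.2 + d))) x = c * x ^ d * evalL L x := by
  induction L with
  | nil => simp [evalL]
  | cons p L ih =>
      simp only [evalL, List.map_cons, List.sum_cons] at *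
      rw [ih, Real.rpow_add hx]
      ring

lemma evalL_map_neg (L : List (ℝ × ℝ)) (x : ℝ) :
    evalL (L.map (fun p => (p.1 * -p.2, p.2 - 1))) x = - evalL (dL L) x := by
  induction L with
  | nil => simp [evalL, dL]
  | cons p L ih =>
      simp only [evalL, dL, List.map_cons, List.sum_cons] at *
      rw [ih]
      ring

lemma good_deriv {a α : ℝ} (ha : 0 < a) (hα : 0 < α) (hα1 : α ≤ 1) {G : ℝ → ℝ}
    (hG : Good a α G) :
    ∃ H : ℝ → ℝ, Good a α H ∧ ∀ x, 0 < x → HasDerivAt G (-(H x)) x := by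
  obtain ⟨L, hL, hGx⟩ := hG
  set L' : List (ℝ × ℝ) :=
    L.map (fun p => (a * α * p.1, p.2 + (α - 1))) ++ L.map (fun p => (p.1 * -p.2, p.2 - 1))
    with hL'
  refine ⟨fun x => Real.exp (-a * x ^ α) * evalL L' x, ⟨L', ?_, fun x hx => rfl⟩, ?_⟩
  · intro p hp
    rw [hL'] at hp
    simp only [List.mem_append, List.mem_map] at hp
    rcases hp with ⟨q, hq, rfl⟩ | ⟨q, hq, rfl⟩
    · refine ⟨mul_nonneg (mul_nonneg ha.le hα.le) (hL q hq).1, ?_⟩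
      have := (hL q hq).2
      show q.2 + (α - 1) ≤ 0
      linarith
    · have h2 := (hL q hq).2
      refine ⟨mul_nonneg (hL q hq).1 (by show (0:ℝ) ≤ -q.2; linarith), ?_⟩
      show q.2 - 1 ≤ 0
      linarith
  · intro x hx
    have hxne : x ≠ 0 := hx.ne'
    -- derivative of the explicit formula
    have hinner : HasDerivAt (fun y : ℝ => -a * y ^ α) (-a * (α * x ^ (α - 1))) x :=
      (Real.hasDerivAt_rpow_const (x := x) (p := α) (Or.inl hxne)).const_mul (-a)
    have hexp : HasDerivAt (fun y : ℝ => Real.exp (-a * y ^ α))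
        (Real.exp (-a * x ^ α) * (-a * (α * x ^ (α - 1)))) x := hinner.exp
    have hprod := hexp.mul (hasDerivAt_evalL L x hxne)
    have heq : Real.exp (-a * x ^ α) * (-a * (α * x ^ (α - 1))) * evalL L x
        + Real.exp (-a * x ^ α) * evalL (dL L) x
        = -(Real.exp (-a * x ^ α) * evalL L' x) := by
      rw [hL']
      unfold evalL
      rw [List.map_append, List.sum_append]
      have h1 := evalL_map_shift L (a * α) (α - 1) x hx
      have h2 := evalL_map_neg L x
      unfold evalL at h1 h2
      rw [h1, h2]
      ring
    rw [heq] at hprod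
    -- G agrees with the formula near x
    have hmem : Set.Ioi (0:ℝ) ∈ nhds x := (isOpen_Ioi).mem_nhds hx
    apply hprod.congr_of_eventuallyEq
    filter_upwards [hmem] with y hy
    exact hGx y hy

lemma pascal_sum (f : ℕ → ℝ) (n : ℕ) :
    ∑ j ∈ range (n+2), (-1:ℝ)^j * ((n+1).choose j : ℝ) * f j
      = ∑ j ∈ range (n+1), (-1:ℝ)^j * (n.choose j : ℝ) * f j
        - ∑ j ∈ range (n+1), (-1:ℝ)^j * (n.choose j : ℝ) * f (j+1) := by
  rw [Finset.sum_range_succ' (fun j => (-1:ℝ)^j * ((n+1).choose j : ℝ) * f j) (n+1),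
      Finset.sum_range_succ' (fun j => (-1:ℝ)^j * ((n).choose j : ℝ) * f j) n]
  have h2 : ∑ i ∈ range n, (-1:ℝ)^(i+1) * (n.choose (i+1) : ℝ) * f (i+1)
      = ∑ i ∈ range (n+1), (-1:ℝ)^(i+1) * (n.choose (i+1) : ℝ) * f (i+1) := by
    rw [Finset.sum_range_succ, Nat.choose_succ_self]
    simp
  rw [h2]
  have h3 : ∀ i ∈ range (n+1), (-1:ℝ)^(i+1) * (((n+1)).choose (i+1) : ℝ) * f (i+1)
      = (-1:ℝ)^(i+1) * (n.choose (i+1) : ℝ) * f (i+1)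
        + -((-1:ℝ)^i * (n.choose i : ℝ) * f (i+1)) := by
    intro i _
    rw [Nat.choose_succ_succ, Nat.cast_add]
    ring
  rw [Finset.sum_congr rfl h3, Finset.sum_add_distrib, Finset.sum_neg_distrib]
  simp only [Nat.choose_zero_right, Nat.cast_one, pow_zero, one_mul, mul_one]
  ring

lemma key {a α : ℝ} (ha : 0 < a) (hα : 0 < α) (hα1 : α ≤ 1) :
    ∀ n : ℕ, ∀ G : ℝ → ℝ, Good a α G → ∀ x h : ℝ, 0 < x → 0 < h →
      0 ≤ ∑ j ∈ range (n+1), (-1:ℝ)^j * (n.choose j : ℝ) * G (x + (j:ℝ)*h) := by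
  intro n
  induction n with
  | zero =>
      intro G hG x h hx hh
      simpa using good_nonneg hG hx
  | succ n ih =>
      intro G hG x h hx hh
      obtain ⟨H, hHgood, hderiv⟩ := good_deriv ha hα hα1 hG
      set φ : ℝ → ℝ := fun s => ∑ j ∈ range (n+1), (-1:ℝ)^j * (n.choose j : ℝ) * G (s + (j:ℝ)*h)
        with hφ
      -- derivative of φ on Ioi 0
      have hφderiv : ∀ s : ℝ, 0 < s →
          HasDerivAt φ (∑ j ∈ range (n+1), (-1:ℝ)^j * (n.choose j : ℝ) * (-(H (s + (j:ℝ)*h)))) s := by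
        intro s hs
        apply HasDerivAt.fun_sum
        intro j _
        have hpos : 0 < s + (j:ℝ)*h := by positivity
        have h1 : HasDerivAt (fun y : ℝ => G (y + (j:ℝ)*h)) (-(H (s + (j:ℝ)*h))) s := by
          have := (hderiv _ hpos).comp s ((hasDerivAt_id s).add_const ((j:ℝ)*h))
          simpa [Function.comp_def] using this
        exact h1.const_mul _
      -- φ is antitone on [x, x+h]
      have hanti : AntitoneOn φ (Set.Icc x (x+h)) := by
        apply antitoneOn_of_deriv_nonpos (convex_Icc x (x+h))
        · intro s hs
          have hs0 : 0 < s := lt_of_lt_of_le hx hs.1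
          exact ((hφderiv s hs0).differentiableAt).continuousAt.continuousWithinAt
        · intro s hs
          rw [interior_Icc] at hs
          exact ((hφderiv s (lt_trans hx hs.1)).differentiableAt).differentiableWithinAt
        · intro s hs
          rw [interior_Icc] at hs
          have hs0 : 0 < s := lt_trans hx hs.1
          rw [(hφderiv s hs0).deriv]
          have : ∑ j ∈ range (n+1), (-1:ℝ)^j * (n.choose j : ℝ) * (-(H (s + (j:ℝ)*h)))
              = -∑ j ∈ range (n+1), (-1:ℝ)^j * (n.choose j : ℝ) * H (s + (j:ℝ)*h) := by
            rw [← Finset.sum_neg_distrib]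
            apply Finset.sum_congr rfl
            intro j _; ring
          rw [this]
          simp only [neg_nonpos]
          exact ih H hHgood s h hs0 hh
      have hle : φ (x+h) ≤ φ x :=
        hanti (Set.left_mem_Icc.2 (by linarith)) (Set.right_mem_Icc.2 (by linarith)) (by linarith)
      have hps := pascal_sum (fun j => G (x + (j:ℝ)*h)) n
      have hshift : φ (x+h) = ∑ j ∈ range (n+1), (-1:ℝ)^j * (n.choose j : ℝ) * G (x + ((j:ℕ)+1:ℝ)*h) := by
        rw [hφ]
        apply Finset.sum_congr rfl
        intro j _
        congr 2
        ring
      calc (0:ℝ) ≤ φ x - φ (x+h) := by linarith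
        _ = ∑ j ∈ range (n+1+1), (-1:ℝ)^j * ((n+1).choose j : ℝ) * G (x + (j:ℝ)*h) := by
            rw [hps, hshift, hφ]
            congr 1
            apply Finset.sum_congr rfl
            intro j _
            push_cast
            ring_nf

end Stmt13Aux

/-- Finite-difference form of absolute monotonicity of `t ↦ exp(-a(-t)^α)` on
`(-∞,0)` for `a > 0`, `0 < α < 1`. -/
theorem stmt_13 (a α : ℝ) (ha : 0 < a) (hα : α ∈ Set.Ioo (0 : ℝ) 1) :
    ∀ n : ℕ, ∀ h t : ℝ, 0 < h → t < -((n : ℝ) * h) →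
      0 ≤ ∑ k ∈ Finset.range (n + 1),
        (-1 : ℝ) ^ (n - k) * (n.choose k : ℝ) *
          Real.exp (-a * (-(t + (k : ℝ) * h)) ^ α) := by
  intro n h t hh ht
  obtain ⟨hα0, hα1⟩ := hα
  set x : ℝ := -(t + (n:ℝ)*h) with hxdef
  have hx : 0 < x := by rw [hxdef]; linarith
  have hGood : Stmt13Aux.Good a α (fun y => Real.exp (-a * y ^ α)) := by
    refine ⟨[(1, 0)], ?_, ?_⟩
    · intro p hp; simp at hp; simp [hp]
    · intro y hy
      simp [Stmt13Aux.evalL]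
  have hkey := Stmt13Aux.key ha hα0 hα1.le n _ hGood x h hx hh
  rw [← Finset.sum_range_reflect] at hkey
  refine le_trans hkey (le_of_eq ?_)
  apply Finset.sum_congr rfl
  intro j hj
  rw [Finset.mem_range] at hj
  have hjn : j ≤ n := Nat.lt_succ_iff.mp hj
  have e1 : n + 1 - 1 - j = n - j := by omega
  have e3 : n.choose (n - j) = n.choose j := Nat.choose_symm hjn
  have e4 : ((n - j : ℕ) : ℝ) = (n : ℝ) - (j : ℝ) := Nat.cast_sub hjn
  rw [e1, e3, e4]
  have e5 : x + ((n:ℝ) - (j:ℝ)) * h = -(t + (j:ℝ)*h) := by rw [hxdef]; ring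
  rw [e5]
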